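/- Let n ≥ 2, let λ₁, …, λ_n be complex numbers, let F be the n-by-n discrete Fourier transform matrix with entries f_{ij} = ω^{(i−1)(j−1)}/√n where ω = exp(−2πi/n), let D = diag(λ₁, …, λ_n), and let A = F D F*. Then for every k ∈ {1, …, n} and every pair of indices i ≠ j, the midpoint (λ_i + λ_j)/2 belongs to the field of values of the principal submatrix A_{(k)}. In particular, F(A_{(k)}) is inscribed in the polygon ∂ conv(λ₁, …, λ_n) with points of tangency at the midpoints of its sides. -/

import Mathlib

open Matrix Complex

/-- The field of values (numerical range) of a complex matrix:
`F(A) = { x* A x : x* x = 1 }`. -/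
def fov {n : ℕ} (A : Matrix (Fin n) (Fin n) ℂ) : Set ℂ :=
  {z | ∃ x : Fin n → ℂ, star x ⬝ᵥ x = 1 ∧ star x ⬝ᵥ A.mulVec x = z}

/-- The principal submatrix `A_{(k)}` obtained by deleting the `k`-th row and column. -/
def subAt {n : ℕ} (A : Matrix (Fin (n + 1)) (Fin (n + 1)) ℂ) (k : Fin (n + 1)) :
    Matrix (Fin n) (Fin n) ℂ :=
  A.submatrix k.succAbove k.succAbove
lemma dft_key {n : ℕ} (ω : ℂ)
    (hω : ω = Complex.exp (-(2 * Real.pi * Complex.I) / (n + 1)))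
    (a b : Fin (n + 1)) :
    ∑ p : Fin (n + 1), (starRingEnd ℂ) (ω ^ ((p : ℕ) * (a : ℕ))) * ω ^ ((p : ℕ) * (b : ℕ))
      = if a = b then ((n + 1 : ℕ) : ℂ) else 0 := by
  have hprim : IsPrimitiveRoot ω (n + 1) := by
    have h := Complex.isPrimitiveRoot_exp (n + 1) (Nat.succ_ne_zero n)
    have he : ω = (Complex.exp (2 * Real.pi * Complex.I / (n + 1 : ℕ)))⁻¹ := by
      rw [hω, ← Complex.exp_neg]
      push_cast
      ring_nf
    rw [he]
    exact h.inv
  have hne : ω ≠ 0 := by rw [hω]; exact Complex.exp_ne_zero _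
  have hroot : ω ^ (n + 1) = 1 := hprim.pow_eq_one
  have hconj : (starRingEnd ℂ) ω = ω⁻¹ := by
    rw [hω, ← Complex.exp_conj, ← Complex.exp_neg]
    congr 1
    simp [map_div₀, map_ofNat, Complex.conj_I]
    ring
  set ζ : ℂ := (ω ^ (a : ℕ))⁻¹ * ω ^ (b : ℕ) with hζ
  have hterm : ∀ p : Fin (n + 1),
      (starRingEnd ℂ) (ω ^ ((p : ℕ) * (a : ℕ))) * ω ^ ((p : ℕ) * (b : ℕ)) = ζ ^ (p : ℕ) := by
    intro p
    rw [map_pow, hconj, hζ, mul_pow, inv_pow, inv_pow, ← pow_mul, ← pow_mul,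
      mul_comm (a : ℕ) (p : ℕ), mul_comm (b : ℕ) (p : ℕ)]
  simp_rw [hterm]
  rw [Fin.sum_univ_eq_sum_range (fun i => ζ ^ i)]
  by_cases hab : a = b
  · subst hab
    simp [hζ, inv_mul_cancel₀ (pow_ne_zero _ hne)]
  · have hζ1 : ζ ≠ 1 := by
      intro h
      apply hab
      have : ω ^ (b : ℕ) = ω ^ (a : ℕ) := by
        rw [hζ, inv_mul_eq_one₀ (pow_ne_zero _ hne)] at h
        exact h.symm
      exact Fin.ext (hprim.pow_inj a.isLt b.isLt this.symm)
    have hζN : ζ ^ (n + 1) = 1 := by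
      rw [hζ, mul_pow, inv_pow, ← pow_mul, ← pow_mul, mul_comm (a:ℕ), mul_comm (b:ℕ),
        pow_mul, pow_mul, hroot, one_pow, one_pow]
      simp
    rw [if_neg hab, geom_sum_eq hζ1, hζN, sub_self, zero_div]

/-- If `F` is the `(n+1)`-by-`(n+1)` DFT matrix (`n + 1 ≥ 2`), `D = diag(λ₁, …, λ_{n+1})`
and `A = F D F*`, then for every `k` and all `i ≠ j`, the midpoint `(λ_i + λ_j)/2` belongs
to `F(A_{(k)})`; i.e. `F(A_{(k)})` is inscribed in `∂ conv(λ₁, …, λ_{n+1})` with tangency at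
the midpoints of the sides. -/
theorem dft_midpoints_mem_fov_deleted {n : ℕ} (hn : 1 ≤ n)
    (lam : Fin (n + 1) → ℂ) (ω : ℂ)
    (hω : ω = Complex.exp (-(2 * Real.pi * Complex.I) / (n + 1)))
    (F : Matrix (Fin (n + 1)) (Fin (n + 1)) ℂ)
    (hF : F = Matrix.of fun i j : Fin (n + 1) =>
      ω ^ ((i : ℕ) * (j : ℕ)) / Real.sqrt (n + 1))
    (A : Matrix (Fin (n + 1)) (Fin (n + 1)) ℂ)
    (hA : A = F * Matrix.diagonal lam * Fᴴ) :
    ∀ k : Fin (n + 1), ∀ i j : Fin (n + 1), i ≠ j →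
      (lam i + lam j) / 2 ∈ fov (subAt A k) := by
  intro k i j hij
  have hne : ω ≠ 0 := by rw [hω]; exact Complex.exp_ne_zero _
  have hconj : (starRingEnd ℂ) ω = ω⁻¹ := by
    rw [hω, ← Complex.exp_conj, ← Complex.exp_neg]
    congr 1
    simp [map_div₀, map_ofNat, Complex.conj_I]
    ring
  have K := dft_key ω hω
  have hNne : ((n + 1 : ℕ) : ℂ) ≠ 0 := Nat.cast_ne_zero.mpr (Nat.succ_ne_zero n)
  set r : ℂ := ((Real.sqrt ((n : ℝ) + 1) : ℝ) : ℂ) with hr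
  have hrr : r * r = ((n + 1 : ℕ) : ℂ) := by
    rw [hr, ← Complex.ofReal_mul, Real.mul_self_sqrt (by positivity)]
    push_cast; ring
  have hrne : r ≠ 0 := by
    intro h; apply hNne; rw [← hrr, h, mul_zero]
  have hrconj : (starRingEnd ℂ) r = r := Complex.conj_ofReal _
  set s : ℂ := ((Real.sqrt (2 * ((n : ℝ) + 1)) : ℝ) : ℂ) with hs
  have hss : s * s = 2 * ((n + 1 : ℕ) : ℂ) := by
    rw [hs, ← Complex.ofReal_mul, Real.mul_self_sqrt (by positivity)]
    push_cast; ring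
  have hsne : s ≠ 0 := by
    have h2 : (2 : ℂ) * ((n + 1 : ℕ) : ℂ) ≠ 0 := mul_ne_zero two_ne_zero hNne
    intro h
    exact h2 (by rw [← hss, h, mul_zero])
  have hsconj : (starRingEnd ℂ) s = s := Complex.conj_ofReal _
  set c : ℂ := -(ω ^ ((k : ℕ) * (i : ℕ))) * (ω ^ ((k : ℕ) * (j : ℕ)))⁻¹ with hc
  set y : Fin (n + 1) → ℂ :=
    fun p => (ω ^ ((p : ℕ) * (i : ℕ)) + c * ω ^ ((p : ℕ) * (j : ℕ))) / s with hy
  have hyk : y k = 0 := by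
    simp only [hy, hc]
    field_simp
    ring
  have hcc : (starRingEnd ℂ) c * c = 1 := by
    simp only [hc, map_neg, _root_.map_mul, map_inv₀, map_pow, hconj, inv_pow, inv_inv]
    field_simp
  -- the norm condition
  have S1 : ∑ p : Fin (n + 1), (starRingEnd ℂ) (y p) * y p = 1 := by
    have e : ∀ p : Fin (n + 1), (starRingEnd ℂ) (y p) * y p =
        ((starRingEnd ℂ) (ω ^ ((p:ℕ)*(i:ℕ))) * ω ^ ((p:ℕ)*(i:ℕ))
        + c * ((starRingEnd ℂ) (ω ^ ((p:ℕ)*(i:ℕ))) * ω ^ ((p:ℕ)*(j:ℕ)))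
        + (starRingEnd ℂ) c * ((starRingEnd ℂ) (ω ^ ((p:ℕ)*(j:ℕ))) * ω ^ ((p:ℕ)*(i:ℕ)))
        + (starRingEnd ℂ) c * c * ((starRingEnd ℂ) (ω ^ ((p:ℕ)*(j:ℕ))) * ω ^ ((p:ℕ)*(j:ℕ))))
          / (s * s) := by
      intro p
      simp only [hy, map_div₀, map_add, _root_.map_mul, hsconj]
      ring
    simp_rw [e]
    rw [← Finset.sum_div]
    simp_rw [Finset.sum_add_distrib, ← Finset.mul_sum]
    rw [K i i, K i j, K j i, K j j, hss]
    simp only [eq_self_iff_true, if_true, if_neg hij, if_neg (Ne.symm hij), mul_zero, add_zero, zero_add]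
    rw [hcc]
    rw [div_eq_iff (mul_ne_zero two_ne_zero hNne), one_mul]
    ring
  -- inner products against the DFT characters
  have hZ : ∀ m : Fin (n + 1),
      ∑ q : Fin (n + 1), (starRingEnd ℂ) (ω ^ ((q:ℕ)*(m:ℕ))) * y q
        = ((if m = i then ((n + 1 : ℕ) : ℂ) else 0)
          + c * (if m = j then ((n + 1 : ℕ) : ℂ) else 0)) / s := by
    intro m
    have e : ∀ q : Fin (n + 1), (starRingEnd ℂ) (ω ^ ((q:ℕ)*(m:ℕ))) * y q =
        ((starRingEnd ℂ) (ω ^ ((q:ℕ)*(m:ℕ))) * ω ^ ((q:ℕ)*(i:ℕ))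
        + c * ((starRingEnd ℂ) (ω ^ ((q:ℕ)*(m:ℕ))) * ω ^ ((q:ℕ)*(j:ℕ)))) / s := by
      intro q
      simp only [hy]
      ring
    simp_rw [e]
    rw [← Finset.sum_div]
    rw [Finset.sum_add_distrib, ← Finset.mul_sum, K m i, K m j]
  -- eigen-type formula
  have hAy : ∀ p : Fin (n + 1), A.mulVec y p =
      (lam i * ω ^ ((p:ℕ)*(i:ℕ)) + c * lam j * ω ^ ((p:ℕ)*(j:ℕ))) / s := by
    intro p
    have hApq : ∀ q : Fin (n + 1), A p q =
        ∑ m : Fin (n + 1), (ω ^ ((p:ℕ)*(m:ℕ)) / r) * lam m *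
          ((starRingEnd ℂ) (ω ^ ((q:ℕ)*(m:ℕ))) / r) := by
      intro q
      rw [hA, hF, Matrix.mul_apply]
      refine Finset.sum_congr rfl fun m _ => ?_
      rw [Matrix.mul_diagonal, Matrix.conjTranspose_apply]
      simp only [Matrix.of_apply, RCLike.star_def, map_div₀, hrconj]
    have h1 : A.mulVec y p = ∑ m : Fin (n + 1),
        (ω ^ ((p:ℕ)*(m:ℕ)) / r) * lam m *
          ((∑ q : Fin (n + 1), (starRingEnd ℂ) (ω ^ ((q:ℕ)*(m:ℕ))) * y q) / r) := by
      simp only [Matrix.mulVec, dotProduct]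
      simp_rw [hApq, Finset.sum_mul]
      rw [Finset.sum_comm]
      refine Finset.sum_congr rfl fun m _ => ?_
      rw [Finset.sum_div, Finset.mul_sum]
      refine Finset.sum_congr rfl fun q _ => ?_
      ring
    rw [h1]
    simp_rw [hZ]
    have e2 : ∀ m : Fin (n + 1),
        (ω ^ ((p:ℕ)*(m:ℕ)) / r) * lam m *
          ((((if m = i then ((n + 1 : ℕ) : ℂ) else 0)
            + c * (if m = j then ((n + 1 : ℕ) : ℂ) else 0)) / s) / r)
        = (if m = i then lam i * ω ^ ((p:ℕ)*(i:ℕ)) * ((n + 1 : ℕ) : ℂ) / (r * r * s) else 0)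
          + (if m = j then c * lam j * ω ^ ((p:ℕ)*(j:ℕ)) * ((n + 1 : ℕ) : ℂ) / (r * r * s)
            else 0) := by
      intro m
      by_cases hm1 : m = i
      · rw [hm1]
        simp only [eq_self_iff_true, if_true, if_neg hij]
        ring
      · by_cases hm2 : m = j
        · rw [hm2]
          simp only [eq_self_iff_true, if_true, if_neg (Ne.symm hij)]
          ring
        · simp only [if_neg hm1, if_neg hm2]
          ring
    simp_rw [e2]
    rw [Finset.sum_add_distrib]
    simp only [Finset.sum_ite_eq', Finset.mem_univ, if_true]
    rw [hrr]
    have hNcancel : ∀ z : ℂ, z * ((n + 1 : ℕ) : ℂ) / (((n + 1 : ℕ) : ℂ) * s) = z / s := by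
      intro z
      rw [mul_comm z ((n + 1 : ℕ) : ℂ)]
      exact mul_div_mul_left _ _ hNne
    rw [hNcancel, hNcancel, ← add_div]
  -- the quadratic form value
  have S2 : ∑ p : Fin (n + 1), (starRingEnd ℂ) (y p) * A.mulVec y p
      = (lam i + lam j) / 2 := by
    have e : ∀ p : Fin (n + 1), (starRingEnd ℂ) (y p) * A.mulVec y p =
        (lam i * ((starRingEnd ℂ) (ω ^ ((p:ℕ)*(i:ℕ))) * ω ^ ((p:ℕ)*(i:ℕ)))
        + c * lam j * ((starRingEnd ℂ) (ω ^ ((p:ℕ)*(i:ℕ))) * ω ^ ((p:ℕ)*(j:ℕ)))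
        + (starRingEnd ℂ) c * lam i *
            ((starRingEnd ℂ) (ω ^ ((p:ℕ)*(j:ℕ))) * ω ^ ((p:ℕ)*(i:ℕ)))
        + (starRingEnd ℂ) c * c * lam j *
            ((starRingEnd ℂ) (ω ^ ((p:ℕ)*(j:ℕ))) * ω ^ ((p:ℕ)*(j:ℕ)))) / (s * s) := by
      intro p
      rw [hAy]
      simp only [hy, map_div₀, map_add, _root_.map_mul, hsconj]
      ring
    simp_rw [e]
    rw [← Finset.sum_div]
    simp_rw [Finset.sum_add_distrib, ← Finset.mul_sum]
    rw [K i i, K i j, K j i, K j j, hss]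
    simp only [eq_self_iff_true, if_true, if_neg hij, if_neg (Ne.symm hij), mul_zero, add_zero, zero_add]
    have : (starRingEnd ℂ) c * c * lam j * ((n + 1 : ℕ) : ℂ)
        = lam j * ((n + 1 : ℕ) : ℂ) := by
      rw [show (starRingEnd ℂ) c * c * lam j = ((starRingEnd ℂ) c * c) * lam j from rfl, hcc]
      ring
    rw [this]
    rw [div_eq_div_iff (mul_ne_zero two_ne_zero hNne) two_ne_zero]
    ring
  -- assemble
  refine ⟨fun q => y (k.succAbove q), ?_, ?_⟩
  · have ht := Fin.sum_univ_succAbove (fun p => (starRingEnd ℂ) (y p) * y p) k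
    rw [hyk] at ht
    simp only [map_zero, zero_mul, zero_add] at ht
    simp only [dotProduct, Pi.star_apply, RCLike.star_def]
    rw [← ht]
    exact S1
  · have inner : ∀ q : Fin n,
        ∑ p : Fin n, A (k.succAbove q) (k.succAbove p) * y (k.succAbove p)
          = A.mulVec y (k.succAbove q) := by
      intro q
      have ht := Fin.sum_univ_succAbove (fun p => A (k.succAbove q) p * y p) k
      simp only [Matrix.mulVec, dotProduct]
      rw [ht, hyk, mul_zero, zero_add]
    simp only [dotProduct, Pi.star_apply, RCLike.star_def, Matrix.mulVec, subAt,
      Matrix.submatrix_apply]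
    have ht2 := Fin.sum_univ_succAbove (fun p => (starRingEnd ℂ) (y p) * A.mulVec y p) k
    rw [hyk] at ht2
    simp only [map_zero, zero_mul, zero_add] at ht2
    calc ∑ q : Fin n, (starRingEnd ℂ) (y (k.succAbove q)) *
          ∑ p : Fin n, A (k.succAbove q) (k.succAbove p) * y (k.succAbove p)
        = ∑ q : Fin n, (starRingEnd ℂ) (y (k.succAbove q)) * A.mulVec y (k.succAbove q) := by
          refine Finset.sum_congr rfl fun q _ => ?_
          rw [inner q]
      _ = (lam i + lam j) / 2 := by rw [← ht2]; exact S2
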